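/- Let ι be a nonempty finite index type and for each i ∈ ι let (S i, A i, P i, J i, γ) be a finite MDP with common discount factor γ ∈ [0,1). Form the product MDP with state space S = ∏ i, S i, action space A = ∏ i, A i, cost J(s,a) = ∑_{i} J i (s i) (a i), and transitions P s a s' = ∏_{i} P i (s i) (a i) (s' i), and let T denote its Bellman optimality operator and T_i the Bellman optimality operator of the i-th sub-MDP. Then for any family of functions V i : S i → ℝ, defining V : S → ℝ by V(s) = ∑_{i} V i (s i), one has (T V)(s) = ∑_{i} (T_i (V i)) (s i) for all s ∈ S. -/
import Mathlib

lemma marginalize {ι : Type*} [Fintype ι] [DecidableEq ι]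
    (S : ι → Type*) [∀ i, Fintype (S i)]
    (p : ∀ j, S j → ℝ) (hp1 : ∀ j, ∑ y : S j, p j y = 1)
    (i : ι) (v : S i → ℝ) :
    ∑ s' : ∀ j, S j, (∏ j, p j (s' j)) * v (s' i) = ∑ y : S i, p i y * v y := by
  classical
  set g : ∀ j, S j → ℝ := Function.update (fun j y => p j y) i (fun y => p i y * v y) with hg
  have hprod : ∀ s' : ∀ j, S j, (∏ j, p j (s' j)) * v (s' i) = ∏ j, g j (s' j) := by
    intro s'
    rw [← Finset.prod_erase_mul _ _ (Finset.mem_univ i),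
        ← Finset.prod_erase_mul _ _ (Finset.mem_univ i)]
    have h1 : g i (s' i) = p i (s' i) * v (s' i) := by
      simp [hg, Function.update_self]
    have h2 : ∀ j ∈ Finset.univ.erase i, g j (s' j) = p j (s' j) := by
      intro j hj
      have : j ≠ i := (Finset.mem_erase.mp hj).1
      simp [hg, Function.update_of_ne this]
    rw [h1, Finset.prod_congr rfl h2]
    ring
  calc ∑ s' : ∀ j, S j, (∏ j, p j (s' j)) * v (s' i)
      = ∑ s' : ∀ j, S j, ∏ j, g j (s' j) := by
        exact Finset.sum_congr rfl fun s' _ => hprod s'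
    _ = ∏ j, ∑ y : S j, g j y := by
        rw [Finset.prod_univ_sum]
        rw [← Fintype.piFinset_univ]
    _ = ∑ y : S i, p i y * v y := by
        rw [← Finset.prod_erase_mul _ _ (Finset.mem_univ i)]
        have h1 : ∑ y : S i, g i y = ∑ y : S i, p i y * v y := by
          simp [hg]
        have h2 : ∀ j ∈ Finset.univ.erase i, (∑ y : S j, g j y) = 1 := by
          intro j hj
          have : j ≠ i := (Finset.mem_erase.mp hj).1
          simp [hg, Function.update_of_ne this, hp1 j]
        rw [h1, Finset.prod_congr rfl h2, Finset.prod_const_one, one_mul]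

/-- The Bellman optimality operator of a product MDP applied to an additively
separable function decomposes into the sum of the sub-MDP Bellman optimality
operators: `(T V)(s) = ∑ i, (Tᵢ Vᵢ)(s i)` whenever `V(s) = ∑ i, Vᵢ(s i)`. -/
theorem product_bellman_decomposes
    {ι : Type*} [Fintype ι] [DecidableEq ι] [Nonempty ι]
    (S A : ι → Type*)
    [∀ i, Fintype (S i)] [∀ i, Nonempty (S i)]
    [∀ i, Fintype (A i)] [∀ i, Nonempty (A i)]
    (P : ∀ i, S i → A i → S i → ℝ)
    (hP0 : ∀ i, ∀ (x : S i) (b : A i) (y : S i), 0 ≤ P i x b y)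
    (hP1 : ∀ i, ∀ (x : S i) (b : A i), ∑ y : S i, P i x b y = 1)
    (J : ∀ i, S i → A i → ℝ)
    (γ : ℝ) (hγ0 : 0 ≤ γ) (hγ1 : γ < 1)
    (V : ∀ i, S i → ℝ) :
    ∀ s : ∀ i, S i,
      -- `(T V)(s)` for the product MDP, applied to `V(s) = ∑ i, Vᵢ (s i)`:
      Finset.univ.inf' Finset.univ_nonempty
          (fun a : ∀ i, A i =>
            (∑ i, J i (s i) (a i)) +
              γ * ∑ s' : ∀ i, S i,
                (∏ i, P i (s i) (a i) (s' i)) * ∑ i, V i (s' i)) =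
        -- `∑ i, (Tᵢ Vᵢ)(s i)` for the sub-MDPs:
        ∑ i, Finset.univ.inf' Finset.univ_nonempty
          (fun b : A i => J i (s i) b + γ * ∑ y : S i, P i (s i) b y * V i y) := by
  classical
  intro s
  set f : ∀ i, A i → ℝ :=
    fun i b => J i (s i) b + γ * ∑ y : S i, P i (s i) b y * V i y with hf
  have key : ∀ a : ∀ i, A i,
      (∑ i, J i (s i) (a i)) +
        γ * ∑ s' : ∀ i, S i, (∏ i, P i (s i) (a i) (s' i)) * ∑ i, V i (s' i)
      = ∑ i, f i (a i) := by
    intro a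
    have h1 : ∑ s' : ∀ i, S i, (∏ i, P i (s i) (a i) (s' i)) * ∑ i, V i (s' i)
        = ∑ i, ∑ y : S i, P i (s i) (a i) y * V i y := by
      calc ∑ s' : ∀ i, S i, (∏ i, P i (s i) (a i) (s' i)) * ∑ i, V i (s' i)
          = ∑ s' : ∀ i, S i, ∑ i, (∏ j, P j (s j) (a j) (s' j)) * V i (s' i) := by
            exact Finset.sum_congr rfl fun s' _ => Finset.mul_sum _ _ _
        _ = ∑ i, ∑ s' : ∀ i, S i, (∏ j, P j (s j) (a j) (s' j)) * V i (s' i) :=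
            Finset.sum_comm
        _ = ∑ i, ∑ y : S i, P i (s i) (a i) y * V i y := by
            refine Finset.sum_congr rfl fun i _ => ?_
            exact marginalize S (fun j => P j (s j) (a j))
              (fun j => hP1 j (s j) (a j)) i (V i)
    rw [h1, Finset.mul_sum, ← Finset.sum_add_distrib]
  rw [Finset.inf'_congr Finset.univ_nonempty rfl (fun a _ => key a)]
  apply le_antisymm
  · choose b hb hval using fun i =>
      Finset.exists_mem_eq_inf' (Finset.univ_nonempty (α := A i)) (f i)
    calc Finset.univ.inf' Finset.univ_nonempty (fun a : ∀ i, A i => ∑ i, f i (a i))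
        ≤ ∑ i, f i (b i) := Finset.inf'_le _ (Finset.mem_univ _)
      _ = ∑ i, Finset.univ.inf' Finset.univ_nonempty (f i) :=
          Finset.sum_congr rfl fun i _ => (hval i).symm
  · apply Finset.le_inf'
    intro a _
    exact Finset.sum_le_sum fun i _ => Finset.inf'_le _ (Finset.mem_univ _)
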